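/- Let S be a skew Boolean algebra in which the equivalence relation D has only finitely many equivalence classes. Then for every x ∈ S the set A_x = {a ∈ S : a is an atom and a ≤ x} is finite, its elements are pairwise orthogonal (a∧a' = 0 for distinct a, a' ∈ A_x), and x equals the join of A_x: for any enumeration a_1,…,a_m of A_x one has x = a_1∨a_2∨⋯∨a_m (and x = 0 when A_x is empty). -/

import Mathlib

universe u

/-- A skew Boolean algebra. -/
class SBA (S : Type u) where
  wedge : S → S → S
  vee : S → S → S
  diff : S → S → S
  zero : S
  wedge_assoc : ∀ x y z : S, wedge (wedge x y) z = wedge x (wedge y z)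
  vee_assoc : ∀ x y z : S, vee (vee x y) z = vee x (vee y z)
  absorb1 : ∀ x y : S, wedge x (vee x y) = x
  absorb2 : ∀ x y : S, wedge (vee y x) x = x
  absorb3 : ∀ x y : S, vee x (wedge x y) = x
  absorb4 : ∀ x y : S, vee (wedge y x) x = x
  sdistrib1 : ∀ x y z : S, wedge x (vee y z) = vee (wedge x y) (wedge x z)
  sdistrib2 : ∀ x y z : S, wedge (vee x y) z = vee (wedge x z) (wedge y z)
  zero_wedge : ∀ x : S, wedge zero x = zero
  wedge_zero : ∀ x : S, wedge x zero = zero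
  zero_vee : ∀ x : S, vee zero x = x
  vee_zero : ∀ x : S, vee x zero = x
  diff_ax1 : ∀ x y : S, vee (wedge (wedge x y) x) (diff x y) = x
  diff_ax2 : ∀ x y : S, wedge (wedge (wedge x y) x) (diff x y) = zero
  diff_ax3 : ∀ x y : S, wedge (diff x y) (wedge (wedge x y) x) = zero

namespace SBA

scoped infixl:70 " ⋏ " => SBA.wedge
scoped infixl:65 " ⋎ " => SBA.vee
scoped infixl:70 " ∖ " => SBA.diff

variable {S : Type u} [SBA S]

/-- Green's relation `D`: `x D y` iff `x⋏y⋏x = x` and `y⋏x⋏y = y`. -/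
def Drel (x y : S) : Prop := x ⋏ y ⋏ x = x ∧ y ⋏ x ⋏ y = y

/-- The natural partial order: `x ≤ y` iff `x⋏y = x = y⋏x`. -/
def nle (x y : S) : Prop := x ⋏ y = x ∧ y ⋏ x = x

/-- An atom: a nonzero element with nothing strictly between it and `0`. -/
def IsAtom (a : S) : Prop := a ≠ zero ∧ ∀ x : S, nle x a → x = zero ∨ x = a

/-- `X` generates `S`: the only subset of `S` containing `X` and `0` and closed
under the three operations is `S` itself. -/
def Generates (X : Set S) : Prop :=
  ∀ T : Set S, X ⊆ T → zero ∈ T →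
    (∀ a b : S, a ∈ T → b ∈ T → a ⋏ b ∈ T ∧ a ⋎ b ∈ T ∧ a ∖ b ∈ T) →
    T = Set.univ

/-- A homomorphism of skew Boolean algebras. -/
def IsHom {T : Type u} [SBA T] (f : S → T) : Prop :=
  (∀ a b : S, f (a ⋏ b) = f a ⋏ f b) ∧ (∀ a b : S, f (a ⋎ b) = f a ⋎ f b) ∧
    (∀ a b : S, f (a ∖ b) = f a ∖ f b) ∧ f zero = zero

end SBA

open SBA

/-- A left-handed skew Boolean algebra. -/
class LeftHanded (S : Type u) [SBA S] : Prop where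
  lh_wedge : ∀ x y : S, x ⋏ y ⋏ x = x ⋏ y
  lh_vee : ∀ x y : S, x ⋎ y ⋎ x = y ⋎ x

/-- `S` is freely generated by `X` over the variety of all skew Boolean algebras. -/
def FreelyGenerates (S : Type u) [SBA S] (X : Set S) : Prop :=
  Generates X ∧
    ∀ (T : Type u) [SBA T], ∀ g : X → T,
      ∃ f : S → T, IsHom f ∧ ∀ x : X, f x = g x

/-- `S` is freely generated by `X` over the variety of left-handed skew Boolean algebras. -/
def LFreelyGenerates (S : Type u) [SBA S] [LeftHanded S] (X : Set S) : Prop :=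
  Generates X ∧
    ∀ (T : Type u) [SBA T] [LeftHanded T], ∀ g : X → T,
      ∃ f : S → T, IsHom f ∧ ∀ x : X, f x = g x

/-- Left-associated join of a list, with the empty join being `0`. -/
def listJoin {S : Type u} [SBA S] : List S → S
  | [] => SBA.zero
  | h :: t => t.foldl SBA.vee h


section AuxSBA

variable {S : Type u} [SBA S]

private lemma wedge_self' (a : S) : a ⋏ a = a := by
  have h1 := SBA.absorb1 a (a ⋏ a)
  rwa [SBA.absorb3 a a] at h1

private lemma orth_symm' {s u : S} (h : s ⋏ u = SBA.zero) : u ⋏ s = SBA.zero := by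
  calc u ⋏ s = (u ⋏ s) ⋏ (u ⋏ s) := (wedge_self' _).symm
    _ = u ⋏ (s ⋏ (u ⋏ s)) := by rw [SBA.wedge_assoc]
    _ = u ⋏ ((s ⋏ u) ⋏ s) := by rw [SBA.wedge_assoc]
    _ = SBA.zero := by rw [h, SBA.zero_wedge, SBA.wedge_zero]

private lemma nle_refl' (a : S) : nle a a := ⟨wedge_self' a, wedge_self' a⟩

private lemma nle_trans' {a b c : S} (h1 : nle a b) (h2 : nle b c) : nle a c := by
  refine ⟨?_, ?_⟩
  · calc a ⋏ c = (a ⋏ b) ⋏ c := by rw [h1.1]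
      _ = a ⋏ (b ⋏ c) := SBA.wedge_assoc _ _ _
      _ = a ⋏ b := by rw [h2.1]
      _ = a := h1.1
  · calc c ⋏ a = c ⋏ (b ⋏ a) := by rw [h1.2]
      _ = (c ⋏ b) ⋏ a := (SBA.wedge_assoc _ _ _).symm
      _ = b ⋏ a := by rw [h2.2]
      _ = a := h1.2

private lemma nle_antisymm' {a b : S} (h1 : nle a b) (h2 : nle b a) : a = b := by
  calc a = a ⋏ b := h1.1.symm
    _ = b := h2.2

private lemma zero_nle' (a : S) : nle SBA.zero a := ⟨SBA.zero_wedge a, SBA.wedge_zero a⟩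

/-- Commutativity below a common upper bound. -/
private lemma wedge_comm' {x u v : S} (hu : nle u x) (hv : nle v x) : u ⋏ v = v ⋏ u := by
  obtain ⟨hu1, hu2⟩ := hu
  obtain ⟨hv1, hv2⟩ := hv
  have hxux : x ⋏ u ⋏ x = u := by rw [hu2, hu1]
  have h1 : u ⋎ (x ∖ u) = x := by have := SBA.diff_ax1 x u; rwa [hxux] at this
  have h2 : u ⋏ (x ∖ u) = SBA.zero := by have := SBA.diff_ax2 x u; rwa [hxux] at this
  have h3 : (x ∖ u) ⋏ u = SBA.zero := by have := SBA.diff_ax3 x u; rwa [hxux] at this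
  have hd1 : (v ⋏ u) ⋎ (v ⋏ (x ∖ u)) = v := by rw [← SBA.sdistrib1, h1, hv1]
  have hd2 : (u ⋏ v) ⋎ ((x ∖ u) ⋏ v) = v := by rw [← SBA.sdistrib2, h1, hv2]
  have ha : u ⋏ (v ⋏ (x ∖ u)) = SBA.zero :=
    orth_symm' (by rw [SBA.wedge_assoc, h3, SBA.wedge_zero])
  have hb : (x ∖ u) ⋏ (v ⋏ u) = SBA.zero :=
    orth_symm' (by rw [SBA.wedge_assoc, h2, SBA.wedge_zero])
  have e1 : u ⋏ v = u ⋏ (v ⋏ u) := by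
    conv_lhs => rw [← hd1]
    rw [SBA.sdistrib1, ha, SBA.vee_zero]
  have e2 : v ⋏ u = u ⋏ (v ⋏ u) := by
    conv_lhs => rw [← hd2]
    rw [SBA.sdistrib2, SBA.wedge_assoc (x ∖ u) v u, hb, SBA.vee_zero, SBA.wedge_assoc]
  exact e1.trans e2.symm

private lemma nle_wedge_both' {x u v : S} (hu : nle u x) (hv : nle v x) : nle (u ⋏ v) x :=
  ⟨by rw [SBA.wedge_assoc, hv.1], by rw [← SBA.wedge_assoc, hu.2]⟩

private lemma nle_wedge_left' {x u v : S} (hu : nle u x) (hv : nle v x) : nle (u ⋏ v) u := by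
  refine ⟨?_, by rw [← SBA.wedge_assoc, wedge_self']⟩
  calc (u ⋏ v) ⋏ u = u ⋏ (v ⋏ u) := SBA.wedge_assoc _ _ _
    _ = u ⋏ (u ⋏ v) := by rw [wedge_comm' hv hu]
    _ = (u ⋏ u) ⋏ v := (SBA.wedge_assoc _ _ _).symm
    _ = u ⋏ v := by rw [wedge_self']

private lemma nle_vee_both' {x u v : S} (hu : nle u x) (hv : nle v x) : nle (u ⋎ v) x :=
  ⟨by rw [SBA.sdistrib2, hu.1, hv.1], by rw [SBA.sdistrib1, hu.2, hv.2]⟩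

private lemma nle_vee_left' {x u v : S} (hu : nle u x) (hv : nle v x) : nle u (u ⋎ v) := by
  refine ⟨SBA.absorb1 u v, ?_⟩
  rw [wedge_comm' (nle_vee_both' hu hv) hu]
  exact SBA.absorb1 u v

private lemma nle_vee_right' {x u v : S} (hu : nle u x) (hv : nle v x) : nle v (u ⋎ v) := by
  refine ⟨?_, SBA.absorb2 v u⟩
  rw [wedge_comm' hv (nle_vee_both' hu hv)]
  exact SBA.absorb2 v u

private lemma drel_refl' (a : S) : Drel a a := ⟨by rw [wedge_self', wedge_self'], by rw [wedge_self', wedge_self']⟩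

private lemma drel_symm' {a b : S} (h : Drel a b) : Drel b a := ⟨h.2, h.1⟩

private lemma drel_of_RL' {a w c : S} (h1 : a ⋏ w = w) (h2 : w ⋏ a = a)
    (h3 : w ⋏ c = w) (h4 : c ⋏ w = c) : Drel a c := by
  have hwt : w ⋏ (c ⋏ a) = a := by rw [← SBA.wedge_assoc, h3, h2]
  have h_at : a ⋏ (c ⋏ a) = a := by
    calc a ⋏ (c ⋏ a) = (w ⋏ (c ⋏ a)) ⋏ (c ⋏ a) := by rw [hwt]
      _ = w ⋏ ((c ⋏ a) ⋏ (c ⋏ a)) := SBA.wedge_assoc _ _ _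
      _ = w ⋏ (c ⋏ a) := by rw [wedge_self']
      _ = a := hwt
  have huw : (c ⋏ a) ⋏ w = c := by rw [SBA.wedge_assoc, h1, h4]
  have huc : (c ⋏ a) ⋏ ((c ⋏ a) ⋏ w) = c := by
    rw [← SBA.wedge_assoc, wedge_self', huw]
  refine ⟨?_, ?_⟩
  · rw [SBA.wedge_assoc]; exact h_at
  · calc c ⋏ a ⋏ c = (c ⋏ a) ⋏ c := rfl
      _ = (c ⋏ a) ⋏ ((c ⋏ a) ⋏ w) := by rw [huw]
      _ = c := huc

private lemma drel_trans' {a b c : S} (hab : Drel a b) (hbc : Drel b c) : Drel a c := by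
  obtain ⟨h1, h2⟩ := hab
  obtain ⟨h3, h4⟩ := hbc
  -- w = a ⋏ b ⋏ c
  have hub : (a ⋏ b) ⋏ b = a ⋏ b := by rw [SBA.wedge_assoc, wedge_self']
  have hbu : b ⋏ (a ⋏ b) = b := by rw [← SBA.wedge_assoc]; exact h2
  have hbv : b ⋏ (b ⋏ c) = b ⋏ c := by rw [← SBA.wedge_assoc, wedge_self']
  have hcv : c ⋏ (b ⋏ c) = c := by rw [← SBA.wedge_assoc]; exact h4
  have huv : (a ⋏ b) ⋏ (b ⋏ c) = a ⋏ b ⋏ c := by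
    rw [← SBA.wedge_assoc, SBA.wedge_assoc a b b, wedge_self']
  have key1 : (a ⋏ b ⋏ c) ⋏ b = a ⋏ b := by
    calc (a ⋏ b ⋏ c) ⋏ b = ((a ⋏ b) ⋏ (b ⋏ c)) ⋏ b := by rw [huv]
      _ = (a ⋏ b) ⋏ ((b ⋏ c) ⋏ b) := SBA.wedge_assoc _ _ _
      _ = (a ⋏ b) ⋏ b := by rw [h3]
      _ = a ⋏ b := hub
  have hw_u : (a ⋏ b ⋏ c) ⋏ (a ⋏ b) = a ⋏ b := by
    calc (a ⋏ b ⋏ c) ⋏ (a ⋏ b) = (a ⋏ b ⋏ c) ⋏ ((a ⋏ b ⋏ c) ⋏ b) := by rw [key1]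
      _ = ((a ⋏ b ⋏ c) ⋏ (a ⋏ b ⋏ c)) ⋏ b := (SBA.wedge_assoc _ _ _).symm
      _ = (a ⋏ b ⋏ c) ⋏ b := by rw [wedge_self']
      _ = a ⋏ b := key1
  have f2 : (a ⋏ b ⋏ c) ⋏ a = a := by
    calc (a ⋏ b ⋏ c) ⋏ a = (a ⋏ b ⋏ c) ⋏ ((a ⋏ b) ⋏ a) := by rw [h1]
      _ = ((a ⋏ b ⋏ c) ⋏ (a ⋏ b)) ⋏ a := (SBA.wedge_assoc _ _ _).symm
      _ = (a ⋏ b) ⋏ a := by rw [hw_u]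
      _ = a := h1
  have f1 : a ⋏ (a ⋏ b ⋏ c) = a ⋏ b ⋏ c := by
    calc a ⋏ (a ⋏ b ⋏ c) = (a ⋏ (a ⋏ b)) ⋏ c := (SBA.wedge_assoc _ _ _).symm
      _ = ((a ⋏ a) ⋏ b) ⋏ c := by rw [SBA.wedge_assoc a a b]
      _ = a ⋏ b ⋏ c := by rw [wedge_self']
  have f3 : (a ⋏ b ⋏ c) ⋏ c = a ⋏ b ⋏ c := by
    rw [SBA.wedge_assoc (a ⋏ b) c c, wedge_self']
  have hbw : b ⋏ (a ⋏ b ⋏ c) = b ⋏ c := by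
    calc b ⋏ (a ⋏ b ⋏ c) = b ⋏ ((a ⋏ b) ⋏ (b ⋏ c)) := by rw [huv]
      _ = (b ⋏ (a ⋏ b)) ⋏ (b ⋏ c) := (SBA.wedge_assoc _ _ _).symm
      _ = b ⋏ (b ⋏ c) := by rw [hbu]
      _ = b ⋏ c := hbv
  have v_w : (b ⋏ c) ⋏ (a ⋏ b ⋏ c) = b ⋏ c := by
    calc (b ⋏ c) ⋏ (a ⋏ b ⋏ c) = (b ⋏ (a ⋏ b ⋏ c)) ⋏ (a ⋏ b ⋏ c) := by rw [hbw]
      _ = b ⋏ ((a ⋏ b ⋏ c) ⋏ (a ⋏ b ⋏ c)) := SBA.wedge_assoc _ _ _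
      _ = b ⋏ (a ⋏ b ⋏ c) := by rw [wedge_self']
      _ = b ⋏ c := hbw
  have f4 : c ⋏ (a ⋏ b ⋏ c) = c := by
    calc c ⋏ (a ⋏ b ⋏ c) = (c ⋏ (b ⋏ c)) ⋏ (a ⋏ b ⋏ c) := by rw [hcv]
      _ = c ⋏ ((b ⋏ c) ⋏ (a ⋏ b ⋏ c)) := SBA.wedge_assoc _ _ _
      _ = c ⋏ (b ⋏ c) := by rw [v_w]
      _ = c := hcv
  exact drel_of_RL' f1 f2 f3 f4

private lemma drel_equivalence' : Equivalence (Drel (S := S)) :=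
  ⟨drel_refl', drel_symm', drel_trans'⟩

/-- Two elements below `x` that are `D`-related coincide. -/
private lemma eq_of_drel_of_nle' {x y z : S} (hy : nle y x) (hz : nle z x)
    (h : Drel y z) : y = z := by
  have comm := wedge_comm' hz hy
  have h1 : y = y ⋏ z := by
    calc y = (y ⋏ z) ⋏ y := h.1.symm
      _ = y ⋏ (z ⋏ y) := SBA.wedge_assoc _ _ _
      _ = y ⋏ (y ⋏ z) := by rw [comm]
      _ = (y ⋏ y) ⋏ z := (SBA.wedge_assoc _ _ _).symm
      _ = y ⋏ z := by rw [wedge_self']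
  have h2 : z = y ⋏ z := by
    calc z = (z ⋏ y) ⋏ z := h.2.symm
      _ = (y ⋏ z) ⋏ z := by rw [comm]
      _ = y ⋏ (z ⋏ z) := SBA.wedge_assoc _ _ _
      _ = y ⋏ z := by rw [wedge_self']
  exact h1.trans h2.symm

private lemma finite_below' (hfin : Finite (Quot (Drel (S := S)))) (x : S) :
    {y : S | nle y x}.Finite := by
  rw [← Set.finite_coe_iff]
  refine Finite.of_injective (fun y => Quot.mk (Drel (S := S)) y.1) ?_
  rintro ⟨y, hy⟩ ⟨z, hz⟩ h
  have := Quot.eqvGen_exact h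
  have hd : Drel y z := (drel_equivalence'.eqvGen_iff).mp this
  exact Subtype.ext (eq_of_drel_of_nle' hy hz hd)

/-- Every nonzero element below `x` has an atom below it. -/
private lemma exists_atom_le' {x : S} (hf : {y : S | nle y x}.Finite)
    {y : S} (hy : nle y x) (hy0 : y ≠ SBA.zero) : ∃ a : S, SBA.IsAtom a ∧ nle a y := by
  classical
  set P : Set S := {z : S | nle z y ∧ z ≠ SBA.zero} with hP
  have hPfin : P.Finite := hf.subset (fun z hz => nle_trans' hz.1 hy)
  have hPne : P.Nonempty := ⟨y, nle_refl' y, hy0⟩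
  obtain ⟨a, haP, hmin⟩ :=
    Set.exists_min_image P (fun z => {u : S | nle u z ∧ u ≠ SBA.zero}.ncard) hPfin hPne
  refine ⟨a, ⟨haP.2, ?_⟩, haP.1⟩
  intro u hu
  by_contra hcon
  push_neg at hcon
  obtain ⟨hu0, hua⟩ := hcon
  have huP : u ∈ P := ⟨nle_trans' hu haP.1, hu0⟩
  have hssub : {v : S | nle v u ∧ v ≠ SBA.zero} ⊂ {v : S | nle v a ∧ v ≠ SBA.zero} := by
    constructor
    · intro v hv; exact ⟨nle_trans' hv.1 hu, hv.2⟩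
    · intro hsub
      have : a ∈ {v : S | nle v u ∧ v ≠ SBA.zero} := hsub ⟨nle_refl' a, haP.2⟩
      exact hua (nle_antisymm' hu this.1)
  have hfin2 : {v : S | nle v a ∧ v ≠ SBA.zero}.Finite :=
    hf.subset (fun v hv => nle_trans' hv.1 (nle_trans' haP.1 hy))
  have hlt := Set.ncard_lt_ncard hssub hfin2
  have := hmin u huP
  omega

private lemma foldl_nle' (x : S) : ∀ (l : List S) (acc : S), nle acc x →
    (∀ a ∈ l, nle a x) →
    nle (l.foldl SBA.vee acc) x ∧ nle acc (l.foldl SBA.vee acc) ∧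
      (∀ a ∈ l, nle a (l.foldl SBA.vee acc)) := by
  intro l
  induction l with
  | nil => intro acc hacc _; exact ⟨hacc, nle_refl' _, by simp⟩
  | cons h t ih =>
    intro acc hacc hall
    have hh : nle h x := hall h List.mem_cons_self
    have hacc' : nle (acc ⋎ h) x := nle_vee_both' hacc hh
    obtain ⟨r1, r2, r3⟩ := ih (acc ⋎ h) hacc' (fun a ha => hall a (List.mem_cons_of_mem h ha))
    refine ⟨r1, nle_trans' (nle_vee_left' hacc hh) r2, ?_⟩
    intro a ha
    rcases List.mem_cons.1 ha with rfl | hat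
    · exact nle_trans' (nle_vee_right' hacc hh) r2
    · exact r3 a hat

end AuxSBA

theorem stmt3 (S : Type u) [SBA S]
    (hfin : Finite (Quot (Drel (S := S)))) (x : S) :
    {a : S | SBA.IsAtom a ∧ nle a x}.Finite ∧
    (∀ a ∈ {a : S | SBA.IsAtom a ∧ nle a x},
      ∀ b ∈ {a : S | SBA.IsAtom a ∧ nle a x}, a ≠ b → a ⋏ b = SBA.zero) ∧
    (∀ l : List S, l.Nodup → (∀ a : S, a ∈ l ↔ SBA.IsAtom a ∧ nle a x) →
      x = listJoin l) := by
  have hf : {y : S | nle y x}.Finite := finite_below' hfin x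
  refine ⟨hf.subset (fun a ha => ha.2), ?_, ?_⟩
  · -- orthogonality
    rintro a ⟨hatom_a, ha⟩ b ⟨hatom_b, hb⟩ hne
    have hab_le : nle (a ⋏ b) a := nle_wedge_left' ha hb
    rcases hatom_a.2 (a ⋏ b) hab_le with h0 | h1
    · exact h0
    · exfalso
      have hba : b ⋏ a = a := by rw [wedge_comm' hb ha, h1]
      have : nle a b := ⟨h1, hba⟩
      rcases hatom_b.2 a this with h0 | h2
      · exact hatom_a.1 h0
      · exact hne h2
  · -- join of atoms
    intro l _ hmem
    have hall : ∀ a ∈ l, nle a x := fun a ha => ((hmem a).1 ha).2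
    match l with
    | [] =>
      show x = SBA.zero
      by_contra hx0
      obtain ⟨a, hatom, hax⟩ := exists_atom_le' hf (nle_refl' x) hx0
      exact List.not_mem_nil ((hmem a).2 ⟨hatom, hax⟩)
    | h :: t =>
      show x = t.foldl SBA.vee h
      obtain ⟨hjx, hhj, htj⟩ := foldl_nle' x t h (hall h List.mem_cons_self)
        (fun a ha => hall a (List.mem_cons_of_mem h ha))
      set j : S := t.foldl SBA.vee h with hjdef
      have hxjx : x ⋏ j ⋏ x = j := by rw [hjx.2, hjx.1]
      have hx : j ⋎ (x ∖ j) = x := by have := SBA.diff_ax1 x j; rwa [hxjx] at this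
      have hjw : j ⋏ (x ∖ j) = SBA.zero := by have := SBA.diff_ax2 x j; rwa [hxjx] at this
      have hwj : (x ∖ j) ⋏ j = SBA.zero := by have := SBA.diff_ax3 x j; rwa [hxjx] at this
      have hwx : nle (x ∖ j) x := by
        constructor
        · calc (x ∖ j) ⋏ x = (x ∖ j) ⋏ (j ⋎ (x ∖ j)) := by rw [hx]
            _ = ((x ∖ j) ⋏ j) ⋎ ((x ∖ j) ⋏ (x ∖ j)) := SBA.sdistrib1 _ _ _
            _ = x ∖ j := by rw [hwj, SBA.zero_vee, wedge_self']
        · calc x ⋏ (x ∖ j) = (j ⋎ (x ∖ j)) ⋏ (x ∖ j) := by rw [hx]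
            _ = x ∖ j := SBA.absorb2 _ _
      by_cases hw0 : x ∖ j = SBA.zero
      · rw [← hx, hw0, SBA.vee_zero]
      · exfalso
        obtain ⟨a, hatom, haw⟩ := exists_atom_le' hf hwx hw0
        have hax : nle a x := nle_trans' haw hwx
        have hal : a ∈ h :: t := (hmem a).2 ⟨hatom, hax⟩
        have haj : nle a j := by
          rcases List.mem_cons.1 hal with rfl | hat
          · exact hhj
          · exact htj a hat
        have : a = SBA.zero := by
          calc a = a ⋏ (x ∖ j) := haw.1.symm
            _ = (a ⋏ j) ⋏ (x ∖ j) := by rw [haj.1]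
            _ = a ⋏ (j ⋏ (x ∖ j)) := SBA.wedge_assoc _ _ _
            _ = SBA.zero := by rw [hjw, SBA.wedge_zero]
        exact hatom.1 this
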